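/- If Z and Z' are skew-symmetric matrices that are totally nonnegative Pfaffians, then the block diagonal skew-symmetric matrix Ω = diag(Z, Z') is a totally nonnegative Pfaffian. -/

import Mathlib

open Matrix

/-- The Pfaffian of an `N × N` matrix, via the Laplace-type expansion along the first row.
For odd `N` it is `0`, matching the convention that only even-sized skew-symmetric matrices
have a (possibly nonzero) Pfaffian. -/
noncomputable def pf (R : Type*) [CommRing R] : (N : ℕ) → Matrix (Fin N) (Fin N) R → R
  | 0, _ => 1
  | 1, _ => 0
  | (N+2), A => ∑ j : Fin (N+1), (-1 : R)^(j:ℕ) * A 0 j.succ *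
      pf R N (fun a b => A ((j.succAbove a).succ) ((j.succAbove b).succ))

/-- A skew-symmetric real matrix is a *totally nonnegative Pfaffian* if every even-size
principal submatrix has nonnegative Pfaffian. -/
noncomputable def IsTNNPfaffian {N : ℕ} (A : Matrix (Fin N) (Fin N) ℝ) : Prop :=
  ∀ α : Finset (Fin N), Even α.card →
    0 ≤ pf ℝ α.card (A.submatrix (α.orderEmbOfFin rfl) (α.orderEmbOfFin rfl))

/-- A real matrix is *totally nonnegative* if all its minors are nonnegative. -/
def IsTotallyNonneg {n m : ℕ} (L : Matrix (Fin n) (Fin m) ℝ) : Prop :=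
  ∀ (k : ℕ) (f : Fin k → Fin n) (g : Fin k → Fin m), StrictMono f → StrictMono g →
    0 ≤ (L.submatrix f g).det

variable {R : Type*} [CommRing R]

lemma pf_cast {n m : ℕ} (h : n = m) (A : Matrix (Fin n) (Fin n) R) :
    pf R m (A.submatrix (Fin.cast h.symm) (Fin.cast h.symm)) = pf R n A := by
  subst h; rfl

lemma succAbove_val {n : ℕ} (p : Fin (n+1)) (i : Fin n) :
    (p.succAbove i : ℕ) = if (i:ℕ) < (p:ℕ) then (i:ℕ) else (i:ℕ)+1 := by
  rw [Fin.succAbove]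
  split_ifs with h1 h2 h2 <;> simp_all [Fin.lt_def]

lemma pf_odd : ∀ (n : ℕ), Odd n → ∀ (A : Matrix (Fin n) (Fin n) R), pf R n A = 0 := by
  intro n
  induction n using Nat.twoStepInduction with
  | zero => intro h; simp at h
  | one => intro _ A; rfl
  | more n ih _ =>
    intro h A
    have hn : Odd n := by rcases h with ⟨k,hk⟩; exact ⟨k-1, by omega⟩
    show (∑ j : Fin (n+1), _) = 0
    apply Finset.sum_eq_zero
    intro j _
    refine (congrArg (_ * ·) (ih hn _)).trans ?_
    ring

lemma finSum_symm {m n : ℕ} (i : Fin (m+n)) :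
    finSumFinEquiv.symm i = if h : (i:ℕ) < m then Sum.inl ⟨i,h⟩ else Sum.inr ⟨(i:ℕ)-m, by omega⟩ := by
  split_ifs with h
  · have : i = Fin.castAdd n ⟨i,h⟩ := rfl
    conv_lhs => rw [this, finSumFinEquiv_symm_apply_castAdd]
  · have : i = Fin.natAdd m ⟨(i:ℕ)-m, by omega⟩ := Fin.ext (by simp [Fin.natAdd]; omega)
    conv_lhs => rw [this, finSumFinEquiv_symm_apply_natAdd]

noncomputable def bd {m n : ℕ} (Z : Matrix (Fin m) (Fin m) R) (Z' : Matrix (Fin n) (Fin n) R) :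
    Matrix (Fin (m+n)) (Fin (m+n)) R :=
  (fromBlocks Z 0 0 Z').submatrix finSumFinEquiv.symm finSumFinEquiv.symm

lemma bd_apply {m n : ℕ} (Z : Matrix (Fin m) (Fin m) R) (Z' : Matrix (Fin n) (Fin n) R)
    (i k : Fin (m+n)) :
    bd Z Z' i k = if hi : (i:ℕ) < m then
        (if hk : (k:ℕ) < m then Z ⟨i,hi⟩ ⟨k,hk⟩ else 0)
      else (if hk : (k:ℕ) < m then 0 else Z' ⟨(i:ℕ)-m, by omega⟩ ⟨(k:ℕ)-m, by omega⟩) := by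
  rw [bd, submatrix_apply, finSum_symm, finSum_symm]
  split_ifs with h1 h2 h2 <;> rfl

lemma bd_ll {m n : ℕ} {Z : Matrix (Fin m) (Fin m) R} {Z' : Matrix (Fin n) (Fin n) R}
    {i k : Fin (m+n)} (hi : (i:ℕ) < m) (hk : (k:ℕ) < m) :
    bd Z Z' i k = Z ⟨i,hi⟩ ⟨k,hk⟩ := by
  rw [bd_apply, dif_pos hi, dif_pos hk]

lemma bd_lr {m n : ℕ} {Z : Matrix (Fin m) (Fin m) R} {Z' : Matrix (Fin n) (Fin n) R}
    {i k : Fin (m+n)} (hi : (i:ℕ) < m) (hk : ¬ (k:ℕ) < m) :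
    bd Z Z' i k = 0 := by
  rw [bd_apply, dif_pos hi, dif_neg hk]

lemma bd_rl {m n : ℕ} {Z : Matrix (Fin m) (Fin m) R} {Z' : Matrix (Fin n) (Fin n) R}
    {i k : Fin (m+n)} (hi : ¬ (i:ℕ) < m) (hk : (k:ℕ) < m) :
    bd Z Z' i k = 0 := by
  rw [bd_apply, dif_neg hi, dif_pos hk]

lemma bd_rr {m n : ℕ} {Z : Matrix (Fin m) (Fin m) R} {Z' : Matrix (Fin n) (Fin n) R}
    {i k : Fin (m+n)} (hi : ¬ (i:ℕ) < m) (hk : ¬ (k:ℕ) < m) :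
    bd Z Z' i k = Z' ⟨(i:ℕ)-m, by omega⟩ ⟨(k:ℕ)-m, by omega⟩ := by
  rw [bd_apply, dif_neg hi, dif_neg hk]

lemma pf_zero' (A : Matrix (Fin 0) (Fin 0) R) : pf R 0 A = 1 := rfl
lemma pf_one' (A : Matrix (Fin 1) (Fin 1) R) : pf R 1 A = 0 := rfl
lemma pf_succ_succ {N : ℕ} (A : Matrix (Fin (N+2)) (Fin (N+2)) R) :
    pf R (N+2) A = ∑ j : Fin (N+1), (-1 : R)^(j:ℕ) * A 0 j.succ *
      pf R N (fun a b => A ((j.succAbove a).succ) ((j.succAbove b).succ)) := rfl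

lemma pf_bd : ∀ (m : ℕ) {n : ℕ} (Z : Matrix (Fin m) (Fin m) R)
    (Z' : Matrix (Fin n) (Fin n) R),
    pf R (m+n) (bd Z Z') = pf R m Z * pf R n Z' := by
  intro m
  induction m using Nat.twoStepInduction with
  | zero =>
    intro n Z Z'
    rw [pf_zero', one_mul]
    have h : n = 0 + n := by omega
    rw [← pf_cast h Z']
    congr 1
    ext i k
    rw [bd_apply]
    rw [dif_neg (by omega), dif_neg (by omega), submatrix_apply]
    congr 1 <;> exact Fin.ext (by simp)
  | one =>
    intro n Z Z'
    rw [pf_one', zero_mul]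
    match n with
    | 0 => rfl
    | (n'+1) =>
      have h : 1 + (n'+1) = n' + 2 := by omega
      rw [← pf_cast h (bd Z Z'), pf_succ_succ]
      apply Finset.sum_eq_zero
      intro j _
      have : ((bd Z Z').submatrix (Fin.cast h.symm) (Fin.cast h.symm)) 0 j.succ = 0 := by
        rw [submatrix_apply, bd_apply, dif_pos (by simp), dif_neg (by simp)]
      rw [this]; ring
  | more m ih _ =>
    intro n Z Z'
    have h : m + 2 + n = m + n + 2 := by omega
    rw [← pf_cast h (bd Z Z'), pf_succ_succ]
    set E := ((bd Z Z').submatrix (Fin.cast h.symm) (Fin.cast h.symm)) with hE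
    have h2 : m + 1 + n = m + n + 1 := by omega
    set e : Fin (m+1) ⊕ Fin n ≃ Fin (m+n+1) := finSumFinEquiv.trans (finCongr h2) with he
    rw [← Equiv.sum_comp e (fun j : Fin (m+n+1) => (-1 : R)^(j:ℕ) * E 0 j.succ *
      pf R (m+n) (fun a b => E ((j.succAbove a).succ) ((j.succAbove b).succ)))]
    rw [Fintype.sum_sum_type]
    have hvl : ∀ j₀ : Fin (m+1), ((e (Sum.inl j₀) : Fin (m+n+1)) : ℕ) = (j₀ : ℕ) := by
      intro j₀; simp [he]
    have hvr : ∀ q : Fin n, ((e (Sum.inr q) : Fin (m+n+1)) : ℕ) = m + 1 + (q : ℕ) := by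
      intro q; simp [he]
    have hzero : ∀ q : Fin n, E 0 (e (Sum.inr q)).succ = 0 := by
      intro q
      rw [hE, submatrix_apply, bd_apply, dif_pos (by simp),
        dif_neg (by simp only [Fin.val_succ, Fin.coe_cast, hvr q]; omega)]
    have hrow : ∀ j₀ : Fin (m+1), E 0 (e (Sum.inl j₀)).succ = Z 0 j₀.succ := by
      intro j₀
      rw [hE, submatrix_apply, bd_apply, dif_pos (by simp),
        dif_pos (by simp only [Fin.val_succ, Fin.coe_cast, hvl j₀]; omega)]
      congr 1 <;> exact Fin.ext (by simp [hvl j₀])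
    have hinner : ∀ j₀ : Fin (m+1),
        (fun a b => E (((e (Sum.inl j₀)).succAbove a).succ) (((e (Sum.inl j₀)).succAbove b).succ))
        = bd (fun a b => Z ((j₀.succAbove a).succ) ((j₀.succAbove b).succ)) Z' := by
      intro j₀
      have hv : ∀ a : Fin (m+n), (((e (Sum.inl j₀)).succAbove a).succ : ℕ)
          = if (a:ℕ) < (j₀:ℕ) then (a:ℕ)+1 else (a:ℕ)+2 := by
        intro a
        rw [Fin.val_succ, succAbove_val, hvl j₀]
        split_ifs <;> omega
      funext a b
      rw [hE, submatrix_apply]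
      have hj : (j₀:ℕ) < m + 1 := j₀.isLt
      set ia := Fin.cast h.symm (((e (Sum.inl j₀)).succAbove a).succ) with hiadef
      set ib := Fin.cast h.symm (((e (Sum.inl j₀)).succAbove b).succ) with hibdef
      have hiv : (ia:ℕ) = if (a:ℕ) < (j₀:ℕ) then (a:ℕ)+1 else (a:ℕ)+2 := by
        rw [hiadef, Fin.coe_cast]; exact hv a
      have hkv : (ib:ℕ) = if (b:ℕ) < (j₀:ℕ) then (b:ℕ)+1 else (b:ℕ)+2 := by
        rw [hibdef, Fin.coe_cast]; exact hv b
      by_cases ha : (a:ℕ) < m <;> by_cases hb : (b:ℕ) < m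
      · have h1 : (ia:ℕ) < m+2 := by rw [hiv]; split_ifs <;> omega
        have h2 : (ib:ℕ) < m+2 := by rw [hkv]; split_ifs <;> omega
        rw [bd_ll h1 h2]; refine Eq.trans ?_ (bd_ll ha hb).symm
        congr 1
        · apply Fin.ext
          show (ia:ℕ) = ((j₀.succAbove ⟨(a:ℕ), ha⟩).succ : ℕ)
          rw [hiv, Fin.val_succ, succAbove_val]
          show _ = (if (a:ℕ) < (j₀:ℕ) then (a:ℕ) else (a:ℕ)+1)+1
          split_ifs <;> omega
        · apply Fin.ext
          show (ib:ℕ) = ((j₀.succAbove ⟨(b:ℕ), hb⟩).succ : ℕ)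
          rw [hkv, Fin.val_succ, succAbove_val]
          show _ = (if (b:ℕ) < (j₀:ℕ) then (b:ℕ) else (b:ℕ)+1)+1
          split_ifs <;> omega
      · have h1 : (ia:ℕ) < m+2 := by rw [hiv]; split_ifs <;> omega
        have h2 : ¬ (ib:ℕ) < m+2 := by rw [hkv]; split_ifs <;> omega
        rw [bd_lr h1 h2]; exact (bd_lr ha hb).symm
      · have h1 : ¬ (ia:ℕ) < m+2 := by rw [hiv]; split_ifs <;> omega
        have h2 : (ib:ℕ) < m+2 := by rw [hkv]; split_ifs <;> omega
        rw [bd_rl h1 h2]; exact (bd_rl ha hb).symm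
      · have h1 : ¬ (ia:ℕ) < m+2 := by rw [hiv]; split_ifs <;> omega
        have h2 : ¬ (ib:ℕ) < m+2 := by rw [hkv]; split_ifs <;> omega
        rw [bd_rr h1 h2]; refine Eq.trans ?_ (bd_rr ha hb).symm
        congr 1
        · apply Fin.ext
          show (ia:ℕ) - (m+2) = (a:ℕ) - m
          rw [hiv]; split_ifs <;> omega
        · apply Fin.ext
          show (ib:ℕ) - (m+2) = (b:ℕ) - m
          rw [hkv]; split_ifs <;> omega
    have hsum2 : (∑ q : Fin n, (-1 : R)^((e (Sum.inr q) : Fin (m+n+1)):ℕ) * E 0 (e (Sum.inr q)).succ *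
        pf R (m+n) (fun a b => E (((e (Sum.inr q)).succAbove a).succ) (((e (Sum.inr q)).succAbove b).succ))) = 0 := by
      apply Finset.sum_eq_zero
      intro q _
      rw [hzero q]; ring
    rw [hsum2, add_zero, pf_succ_succ, Finset.sum_mul]
    apply Finset.sum_congr rfl
    intro j₀ _
    rw [hrow j₀, hinner j₀]; refine (congrArg (_ * ·) (ih _ _)).trans ?_; rw [hvl j₀]
    ring

set_option maxHeartbeats 1000000 in
/-- If skew-symmetric matrices `Z` and `Z'` are totally nonnegative Pfaffians, then so is
the block diagonal skew-symmetric matrix `Ω = diag(Z, Z')`. -/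
theorem tnnPfaffian_blockDiag (N N' : ℕ)
    (Z : Matrix (Fin N) (Fin N) ℝ) (hZ : Zᵀ = -Z) (hZtnn : IsTNNPfaffian Z)
    (Z' : Matrix (Fin N') (Fin N') ℝ) (hZ' : Z'ᵀ = -Z') (hZ'tnn : IsTNNPfaffian Z') :
    IsTNNPfaffian ((Matrix.fromBlocks Z 0 0 Z').submatrix
      finSumFinEquiv.symm finSumFinEquiv.symm) := by
  show ∀ α : Finset (Fin (N+N')), Even α.card →
    0 ≤ pf ℝ α.card ((bd Z Z').submatrix (α.orderEmbOfFin rfl) (α.orderEmbOfFin rfl))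
  intro α hα
  classical
  set α₁ : Finset (Fin N) := Finset.univ.filter (fun i => Fin.castAdd N' i ∈ α) with hα₁
  set α₂ : Finset (Fin N') := Finset.univ.filter (fun i => Fin.natAdd N i ∈ α) with hα₂
  have hαeq : α = α₁.map (Fin.castAddEmb N') ∪
      α₂.map (Fin.natAddEmb N) := by
    ext x
    simp only [Finset.mem_union, Finset.mem_map, Finset.mem_filter, Finset.mem_univ, true_and,
      hα₁, hα₂]
    constructor
    · intro hx
      by_cases hxN : (x:ℕ) < N
      · exact Or.inl ⟨⟨x, hxN⟩, by
          rwa [show Fin.castAdd N' ⟨(x:ℕ), hxN⟩ = x from Fin.ext rfl], Fin.ext rfl⟩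
      · refine Or.inr ⟨⟨(x:ℕ)-N, by omega⟩, ?_, ?_⟩
        · rwa [show Fin.natAdd N ⟨(x:ℕ)-N, by omega⟩ = x from Fin.ext (by
            simp only [Fin.natAdd_mk]; omega)]
        · exact Fin.ext (by show N + ((x:ℕ) - N) = (x:ℕ); omega)
    · rintro (⟨y, hy, rfl⟩ | ⟨y, hy, rfl⟩) <;> simpa using hy
  have hdisj : Disjoint (α₁.map (Fin.castAddEmb N')) (α₂.map (Fin.natAddEmb N)) := by
    rw [Finset.disjoint_left]
    rintro x hx1 hx2
    rw [Finset.mem_map] at hx1 hx2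
    obtain ⟨y, -, rfl⟩ := hx1
    obtain ⟨z, -, hz⟩ := hx2
    have h1 : ((Fin.castAddEmb N' y : Fin (N+N')) : ℕ) = (y:ℕ) := by simp
    have h2 : ((Fin.natAddEmb N z : Fin (N+N')) : ℕ) = N + (z:ℕ) := by simp
    have := congrArg Fin.val hz
    rw [h1, h2] at this
    omega
  have hcard : α₁.card + α₂.card = α.card := by
    rw [hαeq, Finset.card_union_of_disjoint hdisj, Finset.card_map, Finset.card_map]
  set a := α₁.card with ha
  set b := α₂.card with hb
  set g : Fin α.card → Fin (N+N') := fun i =>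
    if h : (i:ℕ) < a then Fin.castAdd N' (α₁.orderEmbOfFin rfl ⟨(i:ℕ), h⟩)
    else Fin.natAdd N (α₂.orderEmbOfFin rfl ⟨(i:ℕ) - a, by omega⟩) with hgdef
  have hgmem : ∀ i, g i ∈ α := by
    intro i
    simp only [hgdef]
    split_ifs with h
    · exact (Finset.mem_filter.1 (Finset.orderEmbOfFin_mem α₁ rfl ⟨(i:ℕ), h⟩)).2
    · exact (Finset.mem_filter.1 (Finset.orderEmbOfFin_mem α₂ rfl ⟨(i:ℕ) - a, by omega⟩)).2
  have hgmono : StrictMono g := by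
    intro i j hij
    simp only [hgdef, Fin.lt_def]
    have hij' : (i:ℕ) < (j:ℕ) := hij
    split_ifs with h1 h2 h2
    · simp only [Fin.coe_castAdd]
      exact (α₁.orderEmbOfFin rfl).strictMono (show (⟨(i:ℕ),h1⟩ : Fin a) < ⟨(j:ℕ),h2⟩ from hij')
    · simp only [Fin.coe_castAdd, Fin.coe_natAdd]
      have := (α₁.orderEmbOfFin rfl ⟨(i:ℕ), h1⟩).isLt
      omega
    · omega
    · simp only [Fin.coe_natAdd]
      have := (α₂.orderEmbOfFin rfl).strictMono
        (show (⟨(i:ℕ)-a, by omega⟩ : Fin b) < ⟨(j:ℕ)-a, by omega⟩ from by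
          show (i:ℕ)-a < (j:ℕ)-a; omega)
      omega
  have hg : ∀ i, α.orderEmbOfFin rfl i = g i := by
    intro i
    rw [← Finset.orderEmbOfFin_unique (rfl : α.card = α.card) hgmem hgmono]
  set Z₁ := Z.submatrix (α₁.orderEmbOfFin rfl) (α₁.orderEmbOfFin rfl) with hZ₁
  set Z₂ := Z'.submatrix (α₂.orderEmbOfFin rfl) (α₂.orderEmbOfFin rfl) with hZ₂
  have hmat : (bd Z Z').submatrix (α.orderEmbOfFin rfl) (α.orderEmbOfFin rfl)
      = (bd Z₁ Z₂).submatrix (Fin.cast hcard.symm) (Fin.cast hcard.symm) := by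
    ext i k
    rw [submatrix_apply, submatrix_apply, hg i, hg k]
    simp only [hgdef]
    have hiv : ((Fin.cast hcard.symm i : Fin (a+b)) : ℕ) = (i:ℕ) := rfl
    have hkv : ((Fin.cast hcard.symm k : Fin (a+b)) : ℕ) = (k:ℕ) := rfl
    by_cases hi : (i:ℕ) < a <;> by_cases hk : (k:ℕ) < a
    · rw [dif_pos hi, dif_pos hk,
        bd_ll (by simpa using (α₁.orderEmbOfFin rfl ⟨(i:ℕ), hi⟩).isLt)
          (by simpa using (α₁.orderEmbOfFin rfl ⟨(k:ℕ), hk⟩).isLt),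
        bd_ll (show ((Fin.cast hcard.symm i : Fin (a+b)) : ℕ) < a from hi)
          (show ((Fin.cast hcard.symm k : Fin (a+b)) : ℕ) < a from hk)]
      rw [hZ₁, submatrix_apply]
      congr 1 <;> exact Fin.ext (by simp)
    · rw [dif_pos hi, dif_neg hk,
        bd_lr (by simpa using (α₁.orderEmbOfFin rfl ⟨(i:ℕ), hi⟩).isLt) (by simp),
        bd_lr (show ((Fin.cast hcard.symm i : Fin (a+b)) : ℕ) < a from hi)
          (show ¬ ((Fin.cast hcard.symm k : Fin (a+b)) : ℕ) < a from hk)]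
    · rw [dif_neg hi, dif_pos hk,
        bd_rl (by simp) (by simpa using (α₁.orderEmbOfFin rfl ⟨(k:ℕ), hk⟩).isLt),
        bd_rl (show ¬ ((Fin.cast hcard.symm i : Fin (a+b)) : ℕ) < a from hi)
          (show ((Fin.cast hcard.symm k : Fin (a+b)) : ℕ) < a from hk)]
    · rw [dif_neg hi, dif_neg hk,
        bd_rr (by simp) (by simp),
        bd_rr (show ¬ ((Fin.cast hcard.symm i : Fin (a+b)) : ℕ) < a from hi)
          (show ¬ ((Fin.cast hcard.symm k : Fin (a+b)) : ℕ) < a from hk)]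
      rw [hZ₂, submatrix_apply]
      congr 1 <;> exact Fin.ext (by simp)
  rw [hmat]
  have := pf_cast hcard (bd Z₁ Z₂)
  rw [this, pf_bd]
  rcases Nat.even_or_odd a with he | ho
  · have hbeven : Even b := by
      have h1 : Even (a + b) := hcard ▸ hα
      rw [Nat.even_add] at h1
      exact h1.mp he
    exact mul_nonneg (hZtnn α₁ he) (hZ'tnn α₂ hbeven)
  · rw [pf_odd a ho Z₁, zero_mul]
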